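/- Let m ≥ 1 and let M_1, …, M_m be invertible real N×N matrices. Suppose the full cyclic product M^{(1)} is diagonalizable over ℂ and has an algebraically simple complex eigenvalue λ_c with |λ_c| ≠ 1 and |μ| < |λ_c| for every other complex eigenvalue μ. For j ∈ {1,…,m} and S < 0 define 𝒰_S^{(j)} := { y ∈ ℝ^N : for every l ∈ {1,…,m} and every integer k ≥ 0 all components of M_{(l,j)} (M^{(j)})^k y are < S, and for every l ∈ {1,…,m} and every coordinate i the i-th component of M_{(l,j)} (M^{(j)})^k y tends to -∞ as k → ∞ }. If ℓ(U^{-∞}(M^{(j₀)})) = 0 for some j₀ ∈ {1,…,m}, then ℓ(𝒰_S^{(j)}) = 0 for every j ∈ {1,…,m} and every S < 0. -/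

import Mathlib

open Matrix MeasureTheory Filter Set

noncomputable section

/-- `U^{-∞}(M)`: points of the open negative orthant all of whose iterates under `M`
tend to `-∞` in every coordinate. -/
def UnegInf {N : ℕ} (M : Matrix (Fin N) (Fin N) ℝ) : Set (Fin N → ℝ) :=
  {y | (∀ i, y i < 0) ∧ ∀ i, Tendsto (fun k : ℕ => ((M ^ k) *ᵥ y) i) atTop atBot}

/-- `μ ∈ ℂ` is an eigenvalue of the real matrix `M` regarded as a complex matrix. -/
def IsCEigenvalue {N : ℕ} (M : Matrix (Fin N) (Fin N) ℝ) (μ : ℂ) : Prop :=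
  ∃ v : Fin N → ℂ, v ≠ 0 ∧ (M.map Complex.ofReal) *ᵥ v = μ • v

/-- `M` is diagonalizable over `ℂ`: `ℂ^N` has a basis of eigenvectors of `M`. -/
def DiagonalizableOverC {N : ℕ} (M : Matrix (Fin N) (Fin N) ℝ) : Prop :=
  ∃ b : Module.Basis (Fin N) ℂ (Fin N → ℂ), ∀ i, ∃ μ : ℂ,
    (M.map Complex.ofReal) *ᵥ (b i) = μ • (b i)

/-- Cyclic product of `d` of the matrices `M_j, M_{j+1}, …` (indices mod `m`),
with `M_j` applied first (i.e. `M_{j+d-1} ⋯ M_{j+1} M_j`). -/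
def cycProd {N m : ℕ} (M : Fin m → Matrix (Fin N) (Fin N) ℝ) (j : Fin m) (d : ℕ) :
    Matrix (Fin N) (Fin N) ℝ :=
  (List.range d).foldl
    (fun A i => M ⟨(j.val + i) % m, Nat.mod_lt _ (lt_of_le_of_lt (Nat.zero_le _) j.isLt)⟩ * A) 1

/-- The full return matrix `M^{(j)} = M_{j-1}⋯M_{j+1}M_j` (all `m` matrices in cyclic
order, `M_j` applied first). -/
def Mfull {N m : ℕ} (M : Fin m → Matrix (Fin N) (Fin N) ℝ) (j : Fin m) :
    Matrix (Fin N) (Fin N) ℝ :=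
  cycProd M j m

/-- The partial-turn matrix `M_{(l,j)} = M_l ⋯ M_j` in cyclic order (`M_j` applied
first, wrapping around if `l < j`); for `l = j` it is just `M_j`. -/
def Mpartial {N m : ℕ} (M : Fin m → Matrix (Fin N) (Fin N) ℝ) (l j : Fin m) :
    Matrix (Fin N) (Fin N) ℝ :=
  cycProd M j ((l.val + m - j.val) % m + 1)

/-- The cyclic successor `q + 1 (mod m)` of an index `q`. -/
def finSucc {m : ℕ} (q : Fin m) : Fin m :=
  ⟨(q.val + 1) % m, Nat.mod_lt _ (lt_of_le_of_lt (Nat.zero_le _) q.isLt)⟩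

/-- `𝒰_S^{(j)}`: the `S`-local basin of attraction of `-∞` for the collection of
transition matrices, i.e. points all of whose partial-turn iterates have all
coordinates below `S` and tend to `-∞`. -/
def calU {N m : ℕ} (M : Fin m → Matrix (Fin N) (Fin N) ℝ) (j : Fin m) (S : ℝ) :
    Set (Fin N → ℝ) :=
  {y | (∀ l : Fin m, ∀ k : ℕ, ∀ i,
          ((Mpartial M l j * (Mfull M j) ^ k) *ᵥ y) i < S) ∧
       (∀ l : Fin m, ∀ i,
          Tendsto (fun k : ℕ => ((Mpartial M l j * (Mfull M j) ^ k) *ᵥ y) i) atTop atBot)}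


lemma keyArith (m j j₀ : ℕ) (hm : 1 ≤ m) (hj : j < m) (hj0 : j₀ < m) :
    (j + (((j₀ + (m-1)) % m + m - j) % m + 1)) % m = j₀ := by
  set a := (j₀ + (m-1)) % m with ha
  have hmod : m ≡ 0 [MOD m] := Nat.modEq_zero_iff_dvd.mpr dvd_rfl
  have h1 : j + ((a + m - j) % m + 1) ≡ j + ((a + m - j) + 1) [MOD m] :=
    ((Nat.mod_modEq (a+m-j) m).add_right 1).add_left j
  have h2 : j + ((a + m - j) + 1) = a + m + 1 := by omega
  have h3 : a + m + 1 ≡ (j₀ + (m-1)) + m + 1 [MOD m] :=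
    ((Nat.mod_modEq _ m).add_right m).add_right 1
  have h4 : (j₀ + (m-1)) + m + 1 = j₀ + m + m := by omega
  have h5 : j₀ + m + m ≡ j₀ + 0 + 0 [MOD m] := ((Nat.ModEq.refl j₀).add hmod).add hmod
  have hX : j + ((a + m - j) % m + 1) ≡ j₀ [MOD m] := by
    calc j + ((a + m - j) % m + 1) ≡ _ [MOD m] := h1
      _ = _ := h2
      _ ≡ _ [MOD m] := h3
      _ = _ := h4
      _ ≡ j₀ + 0 + 0 [MOD m] := h5
      _ = j₀ := by omega
  have hX' : (j + ((a + m - j) % m + 1)) % m = j₀ % m := hX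
  rw [hX', Nat.mod_eq_of_lt hj0]

lemma cycProd_succ {N m : ℕ} (M : Fin m → Matrix (Fin N) (Fin N) ℝ) (j : Fin m) (d : ℕ) :
    cycProd M j (d+1)
      = M ⟨(j.val + d) % m, Nat.mod_lt _ (lt_of_le_of_lt (Nat.zero_le _) j.isLt)⟩
        * cycProd M j d := by
  simp [cycProd, List.range_succ]

lemma cycProd_add {N m : ℕ} (M : Fin m → Matrix (Fin N) (Fin N) ℝ) (j : Fin m) (d e : ℕ) :
    cycProd M j (d + e)
      = cycProd M ⟨(j.val + d) % m, Nat.mod_lt _ (lt_of_le_of_lt (Nat.zero_le _) j.isLt)⟩ e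
        * cycProd M j d := by
  induction e with
  | zero => simp [cycProd]
  | succ e ih =>
    have h : (j.val + (d + e)) % m = ((j.val + d) % m + e) % m := by
      rw [← Nat.add_assoc]
      exact ((Nat.mod_modEq (j.val + d) m).add_right e).symm
    rw [show d + (e+1) = (d+e)+1 from rfl, cycProd_succ, cycProd_succ, ih,
      ← Matrix.mul_assoc]
    congr 2
    refine congrArg M ?_
    exact Fin.ext h

lemma cycProd_kmul {N m : ℕ} (M : Fin m → Matrix (Fin N) (Fin N) ℝ) (j : Fin m) (k : ℕ) :
    cycProd M j (k * m) = (Mfull M j) ^ k := by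
  induction k with
  | zero => simp [cycProd]
  | succ k ih =>
    have h : (j.val + k*m) % m = j.val := by
      rw [Nat.add_mul_mod_self_right, Nat.mod_eq_of_lt j.isLt]
    rw [show (k+1)*m = k*m + m from by ring, cycProd_add, ih, pow_succ']
    congr 1
    exact congrArg (fun t => cycProd M t m) (Fin.ext h)

lemma commute_key {N m : ℕ} (M : Fin m → Matrix (Fin N) (Fin N) ℝ) (j j₀ : Fin m)
    (D : ℕ) (hD : (j.val + D) % m = j₀.val) (k : ℕ) :
    (Mfull M j₀) ^ k * cycProd M j D = cycProd M j D * (Mfull M j) ^ k := by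
  have h1 := cycProd_add M j D (k*m)
  have h2 := cycProd_add M j (k*m) D
  rw [Nat.add_comm (k*m) D] at h2
  have e1 : cycProd M ⟨(j.val + D) % m, Nat.mod_lt _ (lt_of_le_of_lt (Nat.zero_le _) j.isLt)⟩ (k*m)
      = (Mfull M j₀) ^ k := by
    rw [show (⟨(j.val + D) % m, Nat.mod_lt _ (lt_of_le_of_lt (Nat.zero_le _) j.isLt)⟩ : Fin m) = j₀
      from Fin.ext hD, cycProd_kmul]
  have e2 : (⟨(j.val + k*m) % m, Nat.mod_lt _ (lt_of_le_of_lt (Nat.zero_le _) j.isLt)⟩ : Fin m) = j := by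
    apply Fin.ext
    simp only []
    rw [Nat.add_mul_mod_self_right, Nat.mod_eq_of_lt j.isLt]
  rw [e1] at h1
  rw [e2, cycProd_kmul] at h2
  rw [← h1, ← h2]

lemma isUnit_cycProd {N m : ℕ} (M : Fin m → Matrix (Fin N) (Fin N) ℝ)
    (hinv : ∀ q, IsUnit (M q)) (j : Fin m) (d : ℕ) : IsUnit (cycProd M j d) := by
  induction d with
  | zero => simpa [cycProd] using isUnit_one
  | succ d ih => rw [cycProd_succ]; exact (hinv _).mul ih

/-- Lemma 3.8: under the spectral hypotheses on the full return matrix, if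
`U^{-∞}(M^{(j₀)})` has zero Lebesgue measure for some `j₀`, then every `𝒰_S^{(j)}`
has zero Lebesgue measure. -/
theorem stmt5 {N m : ℕ} (hm : 1 ≤ m) (hN : 1 ≤ N)
    (M : Fin m → Matrix (Fin N) (Fin N) ℝ)
    (hinv : ∀ q, IsUnit (M q))
    (hdiag : DiagonalizableOverC (Mfull M ⟨0, hm⟩))
    (lamc : ℂ)
    (hsimple : Polynomial.rootMultiplicity lamc
      ((Mfull M ⟨0, hm⟩).map Complex.ofReal).charpoly = 1)
    (hmod : ‖lamc‖ ≠ 1)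
    (hdom : ∀ μ : ℂ, IsCEigenvalue (Mfull M ⟨0, hm⟩) μ → μ ≠ lamc →
      ‖μ‖ < ‖lamc‖)
    (j₀ : Fin m) (h0 : volume (UnegInf (Mfull M j₀)) = 0) :
    ∀ j : Fin m, ∀ S : ℝ, S < 0 → volume (calU M j S) = 0 := by
  intro j S hS
  have hm' : 0 < m := hm
  set l : Fin m := ⟨(j₀.val + (m-1)) % m, Nat.mod_lt _ hm'⟩ with hl
  set D : ℕ := (l.val + m - j.val) % m + 1 with hDdef
  have hD : (j.val + D) % m = j₀.val := keyArith m j.val j₀.val hm j.isLt j₀.isLt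
  have hA : Mpartial M l j = cycProd M j D := rfl
  have hsub : calU M j S ⊆ (Mpartial M l j).mulVecLin ⁻¹' UnegInf (Mfull M j₀) := by
    rintro y ⟨h1, h2⟩
    have key : ∀ k : ℕ, ((Mfull M j₀) ^ k) *ᵥ ((Mpartial M l j).mulVecLin y)
        = (Mpartial M l j * (Mfull M j) ^ k) *ᵥ y := by
      intro k
      rw [Matrix.mulVecLin_apply, Matrix.mulVec_mulVec, hA,
        commute_key M j j₀ D hD k, ← hA]
    refine ⟨fun i => ?_, fun i => ?_⟩
    · have h0' := h1 l 0 i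
      rw [pow_zero, mul_one] at h0'
      calc ((Mpartial M l j).mulVecLin y) i = ((Mpartial M l j) *ᵥ y) i := rfl
        _ < S := h0'
        _ < 0 := hS
    · exact (h2 l i).congr fun k => (congrFun (key k) i).symm
  have hdet : LinearMap.det (Mpartial M l j).mulVecLin ≠ 0 := by
    rw [← Matrix.toLin'_apply', LinearMap.det_toLin']
    exact ((Matrix.isUnit_iff_isUnit_det _).mp
      (hA ▸ isUnit_cycProd M hinv j D)).ne_zero
  have hpre := MeasureTheory.Measure.addHaar_preimage_linearMap
    (volume : Measure (Fin N → ℝ)) hdet (UnegInf (Mfull M j₀))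
  refine measure_mono_null hsub ?_
  rw [hpre, h0, mul_zero]
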